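/- Let n ≥ 1 be an integer with n ≠ 2 and let λ ∈ ℝ, and set c₀ = −λ/(2n(n+2)). Then: (i) for all c₁, c₂, c₃ ∈ ℝ, the function z(r) = c₀ r³ + c₁ r^{3−n} + c₂ r + c₃ r^{1−n} satisfies (L_n z)(r) = λ for all r > 0; (ii) conversely, if 0 < α < β and z : (α, β) → ℝ is three times continuously differentiable with (L_n z)(r) = λ for all r ∈ (α, β), then there exist c₁, c₂, c₃ ∈ ℝ such that z(r) = c₀ r³ + c₁ r^{3−n} + c₂ r + c₃ r^{1−n} for all r ∈ (α, β). -/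

import Mathlib

open Set

lemma contDiffOn_zpow' (k : WithTop ℕ∞) (m : ℤ) {s : Set ℝ} (hs : (0:ℝ) ∉ s) :
    ContDiffOn ℝ k (fun x : ℝ => x ^ m) s := by
  rcases m with q | q
  · simpa using (contDiff_id.pow q).contDiffOn (s := s)
  · simp only [zpow_negSucc]
    exact ((contDiff_id.pow (q+1)).contDiffOn).inv
      (fun x hx => pow_ne_zero _ (fun h => hs (h ▸ hx)))

lemma hd {x : ℝ} (hx : x ≠ 0) (c : ℝ) (k : ℤ) :
    HasDerivAt (fun w : ℝ => c * w ^ k) (c * (k:ℝ) * x ^ (k-1)) x := by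
  simpa [mul_assoc] using (hasDerivAt_zpow k x (Or.inl hx)).const_mul c

lemma step {x : ℝ} (hx : x ≠ 0) (d0 d1 d2 d3 : ℝ) (a0 a1 a2 a3 : ℤ) :
    HasDerivAt (fun w : ℝ => d0 * w ^ a0 + d1 * w ^ a1 + d2 * w ^ a2 + d3 * w ^ a3)
      (d0 * (a0:ℝ) * x ^ (a0-1) + d1 * (a1:ℝ) * x ^ (a1-1) + d2 * (a2:ℝ) * x ^ (a2-1)
        + d3 * (a3:ℝ) * x ^ (a3-1)) x :=
  (((hd hx d0 a0).add (hd hx d1 a1)).add (hd hx d2 a2)).add (hd hx d3 a3)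

lemma step' {x : ℝ} (hx : x ≠ 0) (d0 d1 d2 d3 e0 e1 e2 e3 : ℝ) (a0 a1 a2 a3 b0 b1 b2 b3 : ℤ)
    (H0 : d0 * (a0:ℝ) = e0) (H1 : d1 * (a1:ℝ) = e1) (H2 : d2 * (a2:ℝ) = e2)
    (H3 : d3 * (a3:ℝ) = e3)
    (h0 : a0 - 1 = b0) (h1 : a1 - 1 = b1) (h2 : a2 - 1 = b2) (h3 : a3 - 1 = b3) :
    HasDerivAt (fun w : ℝ => d0 * w ^ a0 + d1 * w ^ a1 + d2 * w ^ a2 + d3 * w ^ a3)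
      (e0 * x ^ b0 + e1 * x ^ b1 + e2 * x ^ b2 + e3 * x ^ b3) x := by
  subst H0 H1 H2 H3 h0 h1 h2 h3; exact step hx d0 d1 d2 d3 a0 a1 a2 a3

lemma form {x : ℝ} (hx : x ≠ 0) (d0 d1 d2 d3 : ℝ) (t a0 a1 a2 a3 b0 b1 b2 b3 : ℤ)
    (h0 : t + a0 = b0) (h1 : t + a1 = b1) (h2 : t + a2 = b2) (h3 : t + a3 = b3) :
    x ^ t * (d0 * x ^ a0 + d1 * x ^ a1 + d2 * x ^ a2 + d3 * x ^ a3)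
      = d0 * x ^ b0 + d1 * x ^ b1 + d2 * x ^ b2 + d3 * x ^ b3 := by
  subst h0 h1 h2 h3
  simp only [mul_add, zpow_add₀ hx]; ring

lemma dcongr {s : Set ℝ} (hs : IsOpen s) {f g : ℝ → ℝ} (h : ∀ x ∈ s, f x = g x)
    {r : ℝ} (hr : r ∈ s) : deriv f r = deriv g r :=
  Filter.EventuallyEq.deriv_eq (Filter.eventuallyEq_of_mem (hs.mem_nhds hr) h)

lemma anti {s : Set ℝ} (hconv : Convex ℝ s) (ho : IsOpen s) (f g d : ℝ → ℝ)
    (hf : ∀ x ∈ s, HasDerivAt f (d x) x) (hg : ∀ x ∈ s, HasDerivAt g (d x) x) :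
    ∃ C : ℝ, ∀ x ∈ s, f x = g x + C := by
  rcases s.eq_empty_or_nonempty with rfl | ⟨x0, hx0⟩
  · exact ⟨0, by simp⟩
  refine ⟨f x0 - g x0, fun x hx => ?_⟩
  have key : ∀ y ∈ s, (fun t => f t - g t) y = (fun t => f t - g t) x0 := by
    intro y hy
    refine Convex.is_const_of_fderivWithin_eq_zero (𝕜 := ℝ) (E := ℝ) (G := ℝ)
        (f := fun t => f t - g t) hconv ?_ ?_ hy hx0
    · intro t ht
      exact ((hf t ht).sub (hg t ht)).differentiableAt.differentiableWithinAt
    · intro t ht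
      rw [fderivWithin_of_isOpen ho ht]
      have h0 : HasDerivAt (fun t => f t - g t) 0 t := by
        have h := (hf t ht).sub (hg t ht); rwa [sub_self] at h
      rw [h0.hasFDerivAt.fderiv]; ext; simp
  have := key x hx
  simp only at this
  linarith



/-- The radial operator
`(L_n z)(r) = −r^{1−n} (r^{n−1} (r^{1−n} (r^{n−1} z)′)′)′`. -/
noncomputable def Lrad (n : ℕ) (z : ℝ → ℝ) (r : ℝ) : ℝ :=
  -(r ^ ((1 : ℤ) - (n : ℤ))) *
    deriv (fun s : ℝ => s ^ ((n : ℤ) - 1) *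
      deriv (fun u : ℝ => u ^ ((1 : ℤ) - (n : ℤ)) *
        deriv (fun w : ℝ => w ^ ((n : ℤ) - 1) * z w) u) s) r

/-- For `n ≠ 2`, the general solution of `L_n z = λ` is
`z(r) = c₀ r³ + c₁ r^{3−n} + c₂ r + c₃ r^{1−n}` with `c₀ = −λ/(2n(n+2))`. -/
lemma Lrad_eval (n : ℕ) (z : ℝ → ℝ) (b0 b1 b2 b3 : ℝ)
    (hz : ∀ s ∈ Set.Ioi (0:ℝ),
      z s = b0 * s ^ (3:ℤ) + b1 * s ^ ((3:ℤ) - (n:ℤ)) + b2 * s ^ (1:ℤ)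
        + b3 * s ^ ((1:ℤ) - (n:ℤ)))
    {r : ℝ} (hr : 0 < r) :
    Lrad n z r = -(2 * (n:ℝ) * ((n:ℝ) + 2) * b0) := by
  have hr0 : r ≠ 0 := ne_of_gt hr
  have E1 : ∀ w ∈ Set.Ioi (0:ℝ), w ^ ((n:ℤ)-1) * z w
      = b0 * w ^ ((n:ℤ)+2) + b1 * w ^ (2:ℤ) + b2 * w ^ (n:ℤ) + b3 * w ^ (0:ℤ) := by
    intro w hw
    rw [hz w hw]
    refine form (ne_of_gt hw) b0 b1 b2 b3 _ _ _ _ _ _ _ _ _ ?_ ?_ ?_ ?_ <;> ring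
  have D1 : ∀ u ∈ Set.Ioi (0:ℝ), deriv (fun w : ℝ => w ^ ((n:ℤ)-1) * z w) u
      = (b0*((n:ℝ)+2)) * u ^ ((n:ℤ)+1) + (2*b1) * u ^ (1:ℤ)
        + ((n:ℝ)*b2) * u ^ ((n:ℤ)-1) + 0 * u ^ (-1:ℤ) := by
    intro u hu
    exact (dcongr isOpen_Ioi E1 hu).trans
      (step' (ne_of_gt hu) b0 b1 b2 b3 _ _ _ _ _ _ _ _ _ _ _ _
        (by push_cast; ring) (by push_cast; ring) (by push_cast; ring) (by push_cast; ring)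
        (by ring) (by ring) (by ring) (by ring)).deriv
  have E2 : ∀ u ∈ Set.Ioi (0:ℝ),
      u ^ ((1:ℤ)-(n:ℤ)) * deriv (fun w : ℝ => w ^ ((n:ℤ)-1) * z w) u
      = (b0*((n:ℝ)+2)) * u ^ (2:ℤ) + (2*b1) * u ^ ((2:ℤ)-(n:ℤ))
        + ((n:ℝ)*b2) * u ^ (0:ℤ) + 0 * u ^ (-(n:ℤ)) := by
    intro u hu
    rw [D1 u hu]
    refine form (ne_of_gt hu) _ _ _ _ _ _ _ _ _ _ _ _ _ ?_ ?_ ?_ ?_ <;> ring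
  have D2 : ∀ s ∈ Set.Ioi (0:ℝ),
      deriv (fun u : ℝ => u ^ ((1:ℤ)-(n:ℤ)) * deriv (fun w : ℝ => w ^ ((n:ℤ)-1) * z w) u) s
      = (2*b0*((n:ℝ)+2)) * s ^ (1:ℤ) + ((2-(n:ℝ))*(2*b1)) * s ^ ((1:ℤ)-(n:ℤ))
        + 0 * s ^ (-1:ℤ) + 0 * s ^ (-(n:ℤ)-1) := by
    intro s hs
    exact (dcongr isOpen_Ioi E2 hs).trans
      (step' (ne_of_gt hs) _ _ _ _ _ _ _ _ _ _ _ _ _ _ _ _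
        (by push_cast; ring) (by push_cast; ring) (by push_cast; ring) (by push_cast; ring)
        (by ring) (by ring) (by ring) (by ring)).deriv
  have E3 : ∀ s ∈ Set.Ioi (0:ℝ),
      s ^ ((n:ℤ)-1) * deriv (fun u : ℝ => u ^ ((1:ℤ)-(n:ℤ)) *
        deriv (fun w : ℝ => w ^ ((n:ℤ)-1) * z w) u) s
      = (2*b0*((n:ℝ)+2)) * s ^ (n:ℤ) + ((2-(n:ℝ))*(2*b1)) * s ^ (0:ℤ)
        + 0 * s ^ ((n:ℤ)-2) + 0 * s ^ (-2:ℤ) := by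
    intro s hs
    rw [D2 s hs]
    refine form (ne_of_gt hs) _ _ _ _ _ _ _ _ _ _ _ _ _ ?_ ?_ ?_ ?_ <;> ring
  have D3 : deriv (fun s : ℝ => s ^ ((n:ℤ)-1) * deriv (fun u : ℝ => u ^ ((1:ℤ)-(n:ℤ)) *
        deriv (fun w : ℝ => w ^ ((n:ℤ)-1) * z w) u) s) r
      = (2*(n:ℝ)*((n:ℝ)+2)*b0) * r ^ ((n:ℤ)-1) + 0 * r ^ (-1:ℤ)
        + 0 * r ^ ((n:ℤ)-3) + 0 * r ^ (-3:ℤ) :=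
    (dcongr isOpen_Ioi E3 hr).trans
      (step' hr0 _ _ _ _ _ _ _ _ _ _ _ _ _ _ _ _
        (by push_cast; ring) (by push_cast; ring) (by push_cast; ring) (by push_cast; ring)
        (by ring) (by ring) (by ring) (by ring)).deriv
  have hone : r ^ ((1:ℤ)-(n:ℤ)) * r ^ ((n:ℤ)-1) = 1 := by
    rw [← zpow_add₀ hr0, show (1:ℤ)-(n:ℤ) + ((n:ℤ)-1) = 0 from by ring, zpow_zero]
  unfold Lrad
  rw [D3]
  linear_combination (-(2 * (n:ℝ) * ((n:ℝ) + 2) * b0)) * hone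


theorem stmt_2 (n : ℕ) (hn : 1 ≤ n) (hn2 : n ≠ 2) (lam c0 : ℝ)
    (hc0 : c0 = -lam / (2 * (n : ℝ) * ((n : ℝ) + 2))) :
    (∀ c1 c2 c3 : ℝ, ∀ r : ℝ, 0 < r →
      Lrad n (fun s => c0 * s ^ 3 + c1 * s ^ ((3 : ℤ) - (n : ℤ)) + c2 * s
        + c3 * s ^ ((1 : ℤ) - (n : ℤ))) r = lam) ∧
    (∀ α β : ℝ, 0 < α → α < β → ∀ z : ℝ → ℝ,
      ContDiffOn ℝ 3 z (Set.Ioo α β) → (∀ r ∈ Set.Ioo α β, Lrad n z r = lam) →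
      ∃ c1 c2 c3 : ℝ, ∀ r ∈ Set.Ioo α β,
        z r = c0 * r ^ 3 + c1 * r ^ ((3 : ℤ) - (n : ℤ)) + c2 * r
          + c3 * r ^ ((1 : ℤ) - (n : ℤ))) := by
  have hrn : (n:ℝ) ≠ 0 := Nat.cast_ne_zero.mpr (by omega)
  have hrn2 : (n:ℝ) + 2 ≠ 0 := by positivity
  have h2n : (2:ℝ) - (n:ℝ) ≠ 0 := by
    have : (n:ℝ) ≠ 2 := by exact_mod_cast hn2
    exact sub_ne_zero.mpr this.symm
  constructor
  · intro c1 c2 c3 r hr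
    have hz : ∀ s ∈ Set.Ioi (0:ℝ),
        (fun s : ℝ => c0 * s ^ 3 + c1 * s ^ ((3:ℤ) - (n:ℤ)) + c2 * s
          + c3 * s ^ ((1:ℤ) - (n:ℤ))) s
        = c0 * s ^ (3:ℤ) + c1 * s ^ ((3:ℤ) - (n:ℤ)) + c2 * s ^ (1:ℤ)
          + c3 * s ^ ((1:ℤ) - (n:ℤ)) := by
      intro s _
      simp only
      rw [show s ^ (3:ℤ) = s ^ (3:ℕ) from by norm_cast, zpow_one]
    rw [Lrad_eval n _ c0 c1 c2 c3 hz hr, hc0]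
    field_simp
  · intro a b ha hab z hz hL
    have hS : IsOpen (Set.Ioo a b) := isOpen_Ioo
    have hconv : Convex ℝ (Set.Ioo a b) := convex_Ioo a b
    have h0S : (0:ℝ) ∉ Set.Ioo a b := fun h => absurd h.1 (not_lt.mpr ha.le)
    have hxpos : ∀ x ∈ Set.Ioo a b, x ≠ 0 := fun x hx => ne_of_gt (lt_trans ha hx.1)
    unfold Lrad at hL
    set g1 := deriv (fun w : ℝ => w ^ ((n:ℤ) - 1) * z w) with hg1def
    set g2 := deriv (fun u : ℝ => u ^ ((1:ℤ) - (n:ℤ)) * g1 u) with hg2def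
    set g3 := deriv (fun s : ℝ => s ^ ((n:ℤ) - 1) * g2 s) with hg3def
    have hf1 : ContDiffOn ℝ 3 (fun w : ℝ => w ^ ((n:ℤ) - 1) * z w) (Set.Ioo a b) :=
      (contDiffOn_zpow' 3 ((n:ℤ) - 1) h0S).mul hz
    have hc1 : ContDiffOn ℝ 2 g1 (Set.Ioo a b) := hf1.deriv_of_isOpen hS (by norm_num)
    have hf2 : ContDiffOn ℝ 2 (fun u : ℝ => u ^ ((1:ℤ) - (n:ℤ)) * g1 u) (Set.Ioo a b) :=
      (contDiffOn_zpow' 2 ((1:ℤ) - (n:ℤ)) h0S).mul hc1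
    have hc2 : ContDiffOn ℝ 1 g2 (Set.Ioo a b) := hf2.deriv_of_isOpen hS (by norm_num)
    have hf3 : ContDiffOn ℝ 1 (fun s : ℝ => s ^ ((n:ℤ) - 1) * g2 s) (Set.Ioo a b) :=
      (contDiffOn_zpow' 1 ((n:ℤ) - 1) h0S).mul hc2
    have hd1 : ∀ x ∈ Set.Ioo a b, HasDerivAt (fun w : ℝ => w ^ ((n:ℤ) - 1) * z w) (g1 x) x := by
      intro x hx
      have := ((hf1.differentiableOn (by norm_num)).differentiableAt
        (hS.mem_nhds hx)).hasDerivAt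
      rw [hg1def]; exact this
    have hd2 : ∀ x ∈ Set.Ioo a b,
        HasDerivAt (fun u : ℝ => u ^ ((1:ℤ) - (n:ℤ)) * g1 u) (g2 x) x := by
      intro x hx
      have := ((hf2.differentiableOn (by norm_num)).differentiableAt
        (hS.mem_nhds hx)).hasDerivAt
      rw [hg2def]; exact this
    have hd3 : ∀ x ∈ Set.Ioo a b,
        HasDerivAt (fun s : ℝ => s ^ ((n:ℤ) - 1) * g2 s) (g3 x) x := by
      intro x hx
      have := ((hf3.differentiableOn (by norm_num)).differentiableAt
        (hS.mem_nhds hx)).hasDerivAt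
      rw [hg3def]; exact this
    have hone : ∀ x ∈ Set.Ioo a b, x ^ ((1:ℤ) - (n:ℤ)) * x ^ ((n:ℤ) - 1) = 1 := by
      intro x hx
      rw [← zpow_add₀ (hxpos x hx), show (1:ℤ) - (n:ℤ) + ((n:ℤ) - 1) = 0 from by ring,
        zpow_zero]
    -- Step 3: integrate deriv f3 = -lam x^(n-1)
    have hval3 : ∀ x ∈ Set.Ioo a b, HasDerivAt (fun s : ℝ => s ^ ((n:ℤ) - 1) * g2 s)
        (-lam * x ^ ((n:ℤ) - 1) + 0 * x ^ (-1:ℤ) + 0 * x ^ (-1:ℤ) + 0 * x ^ (-1:ℤ)) x := by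
      intro x hx
      have h := hL x hx
      have hv : g3 x = -lam * x ^ ((n:ℤ) - 1) + 0 * x ^ (-1:ℤ) + 0 * x ^ (-1:ℤ)
          + 0 * x ^ (-1:ℤ) := by
        linear_combination (-(x ^ ((n:ℤ) - 1))) * h - g3 x * (hone x hx)
      exact hv ▸ hd3 x hx
    have hQ3 : ∀ x ∈ Set.Ioo a b, HasDerivAt
        (fun x : ℝ => (-lam / (n:ℝ)) * x ^ (n:ℤ) + 0 * x ^ (0:ℤ) + 0 * x ^ (0:ℤ)
          + 0 * x ^ (0:ℤ))
        (-lam * x ^ ((n:ℤ) - 1) + 0 * x ^ (-1:ℤ) + 0 * x ^ (-1:ℤ) + 0 * x ^ (-1:ℤ)) x := by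
      intro x hx
      refine step' (hxpos x hx) _ _ _ _ _ _ _ _ _ _ _ _ _ _ _ _ ?_ ?_ ?_ ?_ ?_ ?_ ?_ ?_
      · field_simp; norm_num
      · push_cast; ring
      · push_cast; ring
      · push_cast; ring
      · ring
      · ring
      · ring
      · ring
    obtain ⟨K1, hK1⟩ := anti hconv hS _ _ _ hval3 hQ3
    -- Step 2
    have hval2 : ∀ x ∈ Set.Ioo a b, HasDerivAt (fun u : ℝ => u ^ ((1:ℤ) - (n:ℤ)) * g1 u)
        ((-lam / (n:ℝ)) * x ^ (1:ℤ) + K1 * x ^ ((1:ℤ) - (n:ℤ)) + 0 * x ^ (-1:ℤ)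
          + 0 * x ^ (-1:ℤ)) x := by
      intro x hx
      have hx0 := hxpos x hx
      have h := hK1 x hx
      have hAP : x ^ ((1:ℤ) - (n:ℤ)) * x ^ (n:ℤ) = x ^ (1:ℤ) := by
        rw [← zpow_add₀ hx0, show (1:ℤ) - (n:ℤ) + (n:ℤ) = 1 from by ring]
      have hv : g2 x = (-lam / (n:ℝ)) * x ^ (1:ℤ) + K1 * x ^ ((1:ℤ) - (n:ℤ))
          + 0 * x ^ (-1:ℤ) + 0 * x ^ (-1:ℤ) := by
        linear_combination (x ^ ((1:ℤ) - (n:ℤ))) * h - g2 x * (hone x hx)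
          + (-lam / (n:ℝ)) * hAP
      exact hv ▸ hd2 x hx
    have hQ2 : ∀ x ∈ Set.Ioo a b, HasDerivAt
        (fun x : ℝ => (-lam / (2 * (n:ℝ))) * x ^ (2:ℤ)
          + (K1 / (2 - (n:ℝ))) * x ^ ((2:ℤ) - (n:ℤ)) + 0 * x ^ (0:ℤ) + 0 * x ^ (0:ℤ))
        ((-lam / (n:ℝ)) * x ^ (1:ℤ) + K1 * x ^ ((1:ℤ) - (n:ℤ)) + 0 * x ^ (-1:ℤ)
          + 0 * x ^ (-1:ℤ)) x := by
      intro x hx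
      refine step' (hxpos x hx) _ _ _ _ _ _ _ _ _ _ _ _ _ _ _ _ ?_ ?_ ?_ ?_ ?_ ?_ ?_ ?_
      · push_cast; field_simp
      · push_cast; field_simp
      · push_cast; ring
      · push_cast; ring
      · ring
      · ring
      · ring
      · ring
    obtain ⟨K2, hK2⟩ := anti hconv hS _ _ _ hval2 hQ2
    -- Step 1
    have hval1 : ∀ x ∈ Set.Ioo a b, HasDerivAt (fun w : ℝ => w ^ ((n:ℤ) - 1) * z w)
        ((-lam / (2 * (n:ℝ))) * x ^ ((n:ℤ) + 1) + (K1 / (2 - (n:ℝ))) * x ^ (1:ℤ)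
          + K2 * x ^ ((n:ℤ) - 1) + 0 * x ^ (-1:ℤ)) x := by
      intro x hx
      have hx0 := hxpos x hx
      have h := hK2 x hx
      have hP1 : x ^ ((n:ℤ) - 1) * x ^ (2:ℤ) = x ^ ((n:ℤ) + 1) := by
        rw [← zpow_add₀ hx0, show (n:ℤ) - 1 + 2 = (n:ℤ) + 1 from by ring]
      have hP2 : x ^ ((n:ℤ) - 1) * x ^ ((2:ℤ) - (n:ℤ)) = x ^ (1:ℤ) := by
        rw [← zpow_add₀ hx0, show (n:ℤ) - 1 + (2 - (n:ℤ)) = 1 from by ring]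
      have hv : g1 x = (-lam / (2 * (n:ℝ))) * x ^ ((n:ℤ) + 1)
          + (K1 / (2 - (n:ℝ))) * x ^ (1:ℤ) + K2 * x ^ ((n:ℤ) - 1) + 0 * x ^ (-1:ℤ) := by
        linear_combination (x ^ ((n:ℤ) - 1)) * h - g1 x * (hone x hx)
          + (-lam / (2 * (n:ℝ))) * hP1 + (K1 / (2 - (n:ℝ))) * hP2
      exact hv ▸ hd1 x hx
    have hQ1 : ∀ x ∈ Set.Ioo a b, HasDerivAt
        (fun x : ℝ => (-lam / (2 * (n:ℝ) * ((n:ℝ) + 2))) * x ^ ((n:ℤ) + 2)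
          + (K1 / ((2 - (n:ℝ)) * 2)) * x ^ (2:ℤ) + (K2 / (n:ℝ)) * x ^ (n:ℤ)
          + 0 * x ^ (0:ℤ))
        ((-lam / (2 * (n:ℝ))) * x ^ ((n:ℤ) + 1) + (K1 / (2 - (n:ℝ))) * x ^ (1:ℤ)
          + K2 * x ^ ((n:ℤ) - 1) + 0 * x ^ (-1:ℤ)) x := by
      intro x hx
      refine step' (hxpos x hx) _ _ _ _ _ _ _ _ _ _ _ _ _ _ _ _ ?_ ?_ ?_ ?_ ?_ ?_ ?_ ?_
      · push_cast; field_simp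
      · push_cast; field_simp
      · push_cast; field_simp
      · push_cast; ring
      · ring
      · ring
      · ring
      · ring
    obtain ⟨K3, hK3⟩ := anti hconv hS _ _ _ hval1 hQ1
    refine ⟨K1 / ((2 - (n:ℝ)) * 2), K2 / (n:ℝ), K3, ?_⟩
    intro r hr
    have hr0 := hxpos r hr
    have h := hK3 r hr
    have hP1 : r ^ ((1:ℤ) - (n:ℤ)) * r ^ ((n:ℤ) + 2) = r ^ (3:ℤ) := by
      rw [← zpow_add₀ hr0, show (1:ℤ) - (n:ℤ) + ((n:ℤ) + 2) = 3 from by ring]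
    have hP2 : r ^ ((1:ℤ) - (n:ℤ)) * r ^ (2:ℤ) = r ^ ((3:ℤ) - (n:ℤ)) := by
      rw [← zpow_add₀ hr0, show (1:ℤ) - (n:ℤ) + 2 = 3 - (n:ℤ) from by ring]
    have hP3 : r ^ ((1:ℤ) - (n:ℤ)) * r ^ (n:ℤ) = r := by
      rw [← zpow_add₀ hr0, show (1:ℤ) - (n:ℤ) + (n:ℤ) = 1 from by ring, zpow_one]
    rw [hc0, show r ^ (3:ℕ) = r ^ (3:ℤ) from by norm_cast]
    linear_combination (r ^ ((1:ℤ) - (n:ℤ))) * h - z r * (hone r hr)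
      + (-lam / (2 * (n:ℝ) * ((n:ℝ) + 2))) * hP1 + (K1 / ((2 - (n:ℝ)) * 2)) * hP2
      + (K2 / (n:ℝ)) * hP3
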